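/- arXiv:2108.07850 — 3 statements merged into one kernel-verified Lean document; each statement's English description precedes it below -/
import Mathlib

section
/- A saturated coideal J of a graded graph is primitive if and only if J is upward directed: for any two vertices λ_1, λ_2 ∈ J there exists a vertex μ ∈ J with μ ≥ λ_1 and μ ≥ λ_2. -/
open Filter Topology ENNReal
open scoped Classical

noncomputable section

structure GradedGraph where
  V : Type
  lvl : V → ℕ
  levelFinite : ∀ n : ℕ, {v : V | lvl v = n}.Finite
  k : V → V → ℝ
  k_nonneg : ∀ a b, 0 ≤ k a b
  k_grade : ∀ a b, k a b ≠ 0 → lvl b = lvl a + 1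
  exists_up : ∀ a, ∃ b, 0 < k a b

namespace GradedGraph

variable (G : GradedGraph)

/-- The edge relation `λ ↗ μ`. -/
def Adj (a b : G.V) : Prop := 0 < G.k a b

/-- The path order: `a ≤ b` iff there is a (possibly empty) path from `a` to `b`. -/
def Le : G.V → G.V → Prop := Relation.ReflTransGen G.Adj

/-- `dimAux n a b` : weighted number of paths of length `n` from `a` to `b`. -/
def dimAux : ℕ → G.V → G.V → ℝ
  | 0, a, b => if a = b then 1 else 0
  | n + 1, a, b => ∑ᶠ c, dimAux n a c * G.k c b

/-- The shifted dimension `dim(a,b)`: weighted number of paths from `a` to `b`. -/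
def dim (a b : G.V) : ℝ := G.dimAux (G.lvl b - G.lvl a) a b

def IsIdeal (I : Set G.V) : Prop := ∀ a ∈ I, ∀ b, G.Le a b → b ∈ I

def IsCoideal (J : Set G.V) : Prop := ∀ a ∈ J, ∀ b, G.Le b a → b ∈ J

def IsSaturatedIdeal (I : Set G.V) : Prop :=
  G.IsIdeal I ∧ ∀ a, (∀ b, G.Adj a b → b ∈ I) → a ∈ I

def IsSaturatedCoideal (J : Set G.V) : Prop :=
  G.IsCoideal J ∧ ∀ a ∈ J, ∃ b ∈ J, G.Adj a b

def IsPrimitiveCoideal (J : Set G.V) : Prop :=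
  G.IsSaturatedCoideal J ∧ ∀ J1 J2 : Set G.V, G.IsSaturatedCoideal J1 →
    G.IsSaturatedCoideal J2 → J = J1 ∪ J2 → J = J1 ∨ J = J2

/-- A harmonic function `φ : Γ → ℝ≥0 ∪ {+∞}`. -/
def Harmonic (φ : G.V → ℝ≥0∞) : Prop :=
  ∀ a, φ a = ∑ᶠ b, ENNReal.ofReal (G.k a b) * φ b

/-- The submodule of relations `λ = Σ_{μ : λ↗μ} κ(λ,μ)·μ` in the free module on vertices. -/
def relSub : Submodule ℝ (G.V →₀ ℝ) :=
  Submodule.span ℝ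
    {x | ∃ a : G.V, x = Finsupp.single a 1 - ∑ᶠ b, G.k a b • Finsupp.single b (1 : ℝ)}

/-- The group `K_0(Γ)`. -/
abbrev K0 := (G.V →₀ ℝ) ⧸ G.relSub

def toK0 : (G.V →₀ ℝ) →ₗ[ℝ] G.K0 := G.relSub.mkQ

/-- The class of a vertex in `K_0(Γ)`. -/
def vtx (a : G.V) : G.K0 := G.toK0 (Finsupp.single a 1)

/-- The positive cone `K_0^+(Γ)` generated by the vertices. -/
def cone : Set G.K0 := {x | ∃ c : G.V →₀ ℝ, (∀ a, 0 ≤ c a) ∧ x = G.toK0 c}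

/-- The partial order `x ≤_K y` defined by the cone. -/
def leK (x y : G.K0) : Prop := y - x ∈ G.cone

/-- The value of (the `ℝ≥0`-linear extension of) `φ` on a nonnegative element of the
free module on vertices. -/
def evalC (φ : G.V → ℝ≥0∞) (c : G.V →₀ ℝ) : ℝ≥0∞ :=
  ∑ a ∈ c.support, ENNReal.ofReal (c a) * φ a

/-- A semifinite harmonic function: it is harmonic, not everywhere finite, and its value
on any element of the cone is the supremum of its finite values on smaller cone elements
(stated on nonnegative representatives). -/
def Semifinite (φ : G.V → ℝ≥0∞) : Prop :=
  G.Harmonic φ ∧ (∃ a, φ a = ⊤) ∧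
    ∀ c : G.V →₀ ℝ, (∀ a, 0 ≤ c a) →
      G.evalC φ c = ⨆ d : {d : G.V →₀ ℝ //
        (∀ a, 0 ≤ d a) ∧ G.leK (G.toK0 d) (G.toK0 c) ∧ G.evalC φ d ≠ ⊤},
          G.evalC φ d.1

/-- A finite or semifinite harmonic function. -/
def FinOrSemifinite (φ : G.V → ℝ≥0∞) : Prop :=
  (G.Harmonic φ ∧ ∀ a, φ a ≠ ⊤) ∨ G.Semifinite φ

/-- An indecomposable (finite or semifinite, not identically zero) harmonic function:
any finite or semifinite harmonic `ψ ≤ φ` not vanishing identically on the finiteness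
ideal of `φ` is proportional to `φ` on the finiteness ideal of `φ`. -/
def Indecomposable (φ : G.V → ℝ≥0∞) : Prop :=
  G.FinOrSemifinite φ ∧ (∃ a, φ a ≠ 0) ∧
    ∀ ψ : G.V → ℝ≥0∞, G.FinOrSemifinite ψ → (∀ a, ψ a ≤ φ a) →
      (∃ a, φ a ≠ ⊤ ∧ ψ a ≠ 0) →
        ∃ C : ℝ≥0∞, ∀ a, φ a ≠ ⊤ → ψ a = C * φ a

end GradedGraph

structure BranchingGraph extends GradedGraph where
  root : V
  root_lvl : lvl root = 0
  root_unique : ∀ v, lvl v = 0 → v = root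
  exists_down : ∀ v, lvl v ≠ 0 → ∃ u, 0 < k u v

end

/-- a saturated coideal is primitive iff it is upward directed. -/
theorem primitive_iff_directed (G : GradedGraph) (J : Set G.V)
    (hJ : G.IsSaturatedCoideal J) :
    G.IsPrimitiveCoideal J ↔ ∀ a ∈ J, ∀ b ∈ J, ∃ c ∈ J, G.Le a c ∧ G.Le b c := by
  constructor
  · rintro ⟨-, hprim⟩ a ha b hb
    set J1 : Set G.V := {v | v ∈ J ∧ ∃ c ∈ J, G.Le v c ∧ G.Le a c} with hJ1def
    set J2 : Set G.V :=
      {w | w ∈ J ∧ ∃ v ∈ J, G.Le w v ∧ ¬ ∃ c ∈ J, G.Le v c ∧ G.Le a c} with hJ2def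
    have hJ1sat : G.IsSaturatedCoideal J1 := by
      constructor
      · rintro v ⟨hvJ, c, hcJ, hvc, hac⟩ w hwv
        exact ⟨hJ.1 v hvJ w hwv, c, hcJ, hwv.trans hvc, hac⟩
      · rintro v ⟨hvJ, c, hcJ, hvc, hac⟩
        rcases Relation.ReflTransGen.cases_head hvc with rfl | ⟨u, hadj, huc⟩
        · obtain ⟨d, hdJ, hcd⟩ := hJ.2 v hvJ
          exact ⟨d, ⟨hdJ, d, hdJ, Relation.ReflTransGen.refl, hac.tail hcd⟩, hcd⟩
        · exact ⟨u, ⟨hJ.1 c hcJ u huc, c, hcJ, huc, hac⟩, hadj⟩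
    have hJ2sat : G.IsSaturatedCoideal J2 := by
      constructor
      · rintro v ⟨hvJ, x, hxJ, hvx, hx⟩ w hwv
        exact ⟨hJ.1 v hvJ w hwv, x, hxJ, hwv.trans hvx, hx⟩
      · rintro v ⟨hvJ, x, hxJ, hvx, hx⟩
        rcases Relation.ReflTransGen.cases_head hvx with rfl | ⟨u, hadj, hux⟩
        · obtain ⟨d, hdJ, hvd⟩ := hJ.2 v hvJ
          refine ⟨d, ⟨hdJ, d, hdJ, Relation.ReflTransGen.refl, ?_⟩, hvd⟩
          rintro ⟨c, hcJ, hdc, hac⟩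
          exact hx ⟨c, hcJ, Relation.ReflTransGen.head hvd hdc, hac⟩
        · exact ⟨u, ⟨hJ.1 x hxJ u hux, x, hxJ, hux, hx⟩, hadj⟩
    have hunion : J = J1 ∪ J2 := by
      ext v
      constructor
      · intro hvJ
        by_cases hcomp : ∃ c ∈ J, G.Le v c ∧ G.Le a c
        · exact Or.inl ⟨hvJ, hcomp⟩
        · exact Or.inr ⟨hvJ, v, hvJ, Relation.ReflTransGen.refl, hcomp⟩
      · rintro (⟨hvJ, -⟩ | ⟨hvJ, -⟩) <;> exact hvJ
    have haJ2 : a ∉ J2 := by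
      rintro ⟨-, x, hxJ, hax, hx⟩
      exact hx ⟨x, hxJ, Relation.ReflTransGen.refl, hax⟩
    rcases hprim J1 J2 hJ1sat hJ2sat hunion with h | h
    · have hb1 : b ∈ J1 := h ▸ hb
      obtain ⟨-, c, hcJ, hbc, hac⟩ := hb1
      exact ⟨c, hcJ, hac, hbc⟩
    · exact absurd (h ▸ ha) haJ2
  · intro hdir
    refine ⟨hJ, fun J1 J2 h1 h2 heq => ?_⟩
    by_contra h
    push_neg at h
    obtain ⟨hne1, hne2⟩ := h
    have hsub1 : J1 ⊆ J := by rw [heq]; exact Set.subset_union_left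
    have hsub2 : J2 ⊆ J := by rw [heq]; exact Set.subset_union_right
    obtain ⟨a, haJ, ha1⟩ : ∃ a ∈ J, a ∉ J1 := by
      by_contra hc; push_neg at hc
      exact hne1 (Set.Subset.antisymm hc hsub1)
    obtain ⟨b, hbJ, hb2⟩ : ∃ b ∈ J, b ∉ J2 := by
      by_contra hc; push_neg at hc
      exact hne2 (Set.Subset.antisymm hc hsub2)
    obtain ⟨c, hcJ, hac, hbc⟩ := hdir a haJ b hbJ
    have hc12 : c ∈ J1 ∪ J2 := heq ▸ hcJ
    rcases hc12 with hc1 | hc2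
    · exact ha1 (h1.1 c hc1 a hac)
    · exact hb2 (h2.1 c hc2 b hbc)
end

section
/- Let ψ be a nonnegative real-valued subharmonic function on a graded graph Γ. Then for every vertex λ the sequence N ↦ Σ_{μ ∈ Γ_N} dim(λ,μ) ψ(μ) is non-decreasing in N (for N ≥ |λ|), and hence the limit c̄(λ) = lim_{N→∞} Σ_{μ ∈ Γ_N} dim(λ,μ)ψ(μ) exists in ℝ_{≥0}∪{+∞} and defines a harmonic function c̄ on Γ. -/
open Filter Topology ENNReal
open scoped Classical

section SubharmonicAux

open GradedGraph

variable (G : GradedGraph)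

/-- The finset of vertices at level `n`. -/
noncomputable def levelFinset (n : ℕ) : Finset G.V := (G.levelFinite n).toFinset

lemma mem_levelFinset {n : ℕ} {v : G.V} : v ∈ levelFinset G n ↔ G.lvl v = n := by
  simp [levelFinset, Set.Finite.mem_toFinset]

lemma dimAux_zero (a b : G.V) : G.dimAux 0 a b = if a = b then 1 else 0 := rfl

lemma dimAux_succ (n : ℕ) (a b : G.V) :
    G.dimAux (n + 1) a b = ∑ᶠ c, G.dimAux n a c * G.k c b := rfl

lemma dimAux_nonneg : ∀ (n : ℕ) (a b : G.V), 0 ≤ G.dimAux n a b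
  | 0, a, b => by rw [dimAux_zero]; split <;> norm_num
  | n + 1, a, b => by
    rw [dimAux_succ]
    exact finsum_nonneg fun c => mul_nonneg (dimAux_nonneg n a c) (G.k_nonneg c b)

lemma dimAux_lvl : ∀ (n : ℕ) (a b : G.V), G.dimAux n a b ≠ 0 → G.lvl b = G.lvl a + n
  | 0, a, b => by
    rw [dimAux_zero]
    split
    · rename_i h; subst h; simp
    · simp
  | n + 1, a, b => by
    rw [dimAux_succ]
    intro h
    have : ∃ c, G.dimAux n a c * G.k c b ≠ 0 := by
      by_contra hc
      push_neg at hc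
      exact h (finsum_eq_zero_of_forall_eq_zero hc)
    obtain ⟨c, hc⟩ := this
    have h1 : G.dimAux n a c ≠ 0 := fun h0 => hc (by rw [h0, zero_mul])
    have h2 : G.k c b ≠ 0 := fun h0 => hc (by rw [h0, mul_zero])
    have := dimAux_lvl n a c h1
    have := G.k_grade c b h2
    omega

lemma dimAux_support_subset (n : ℕ) (a : G.V) (f : G.V → ℝ) :
    (Function.support fun c => G.dimAux n a c * f c) ⊆ ↑(levelFinset G (G.lvl a + n)) := by
  intro c hc
  have h1 : G.dimAux n a c ≠ 0 := fun h0 => hc (by simp [Function.mem_support] at *; simp [h0])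
  simp only [Finset.coe_sort_coe, Finset.mem_coe, mem_levelFinset]
  exact dimAux_lvl G n a c h1

lemma k_support_subset (a : G.V) (f : G.V → ℝ) :
    (Function.support fun b => G.k a b * f b) ⊆ ↑(levelFinset G (G.lvl a + 1)) := by
  intro b hb
  have h1 : G.k a b ≠ 0 := fun h0 => hb (by simp [Function.mem_support] at *; simp [h0])
  simp only [Finset.mem_coe, mem_levelFinset]
  exact G.k_grade a b h1

lemma dimAux_succ_left : ∀ (n : ℕ) (a b : G.V),
    G.dimAux (n + 1) a b = ∑ᶠ c, G.k a c * G.dimAux n c b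
  | 0, a, b => by
    rw [dimAux_succ]
    rw [finsum_eq_single _ a (fun c hc => by rw [dimAux_zero]; simp [Ne.symm hc]),
      finsum_eq_single _ b (fun c hc => by rw [dimAux_zero]; simp [hc])]
    rw [dimAux_zero, dimAux_zero]
    simp
  | n + 1, a, b => by
    have hout : G.dimAux (n + 1 + 1) a b
        = ∑ c ∈ levelFinset G (G.lvl a + (n + 1)), G.dimAux (n + 1) a c * G.k c b := by
      rw [dimAux_succ]
      exact finsum_eq_finset_sum_of_support_subset _ (dimAux_support_subset G (n + 1) a _)
    rw [hout]
    have hin : ∀ c : G.V, G.dimAux (n + 1) a c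
        = ∑ d ∈ levelFinset G (G.lvl a + 1), G.k a d * G.dimAux n d c := by
      intro c
      rw [dimAux_succ_left n a c]
      exact finsum_eq_finset_sum_of_support_subset _ (k_support_subset G a _)
    calc ∑ c ∈ levelFinset G (G.lvl a + (n + 1)), G.dimAux (n + 1) a c * G.k c b
        = ∑ c ∈ levelFinset G (G.lvl a + (n + 1)), ∑ d ∈ levelFinset G (G.lvl a + 1),
            G.k a d * (G.dimAux n d c * G.k c b) := by
          refine Finset.sum_congr rfl fun c _ => ?_
          rw [hin c, Finset.sum_mul]
          exact Finset.sum_congr rfl fun d _ => by ring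
      _ = ∑ d ∈ levelFinset G (G.lvl a + 1), G.k a d *
            ∑ c ∈ levelFinset G (G.lvl a + (n + 1)), G.dimAux n d c * G.k c b := by
          rw [Finset.sum_comm]
          exact Finset.sum_congr rfl fun d _ => by rw [Finset.mul_sum]
      _ = ∑ d ∈ levelFinset G (G.lvl a + 1), G.k a d * G.dimAux (n + 1) d b := by
          refine Finset.sum_congr rfl fun d hd => ?_
          congr 1
          have hlvl : G.lvl d = G.lvl a + 1 := (mem_levelFinset G).mp hd
          have hsub2 : (Function.support fun c => G.dimAux n d c * G.k c b)
              ⊆ ↑(levelFinset G (G.lvl a + (n + 1))) := by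
            have h3 := dimAux_support_subset G n d (fun c => G.k c b)
            rwa [show G.lvl d + n = G.lvl a + (n + 1) by omega] at h3
          rw [dimAux_succ, finsum_eq_finset_sum_of_support_subset _ hsub2]
      _ = ∑ᶠ d, G.k a d * G.dimAux (n + 1) d b := by
          rw [finsum_eq_finset_sum_of_support_subset _ (k_support_subset G a _)]

lemma dim_nonneg (a b : G.V) : 0 ≤ G.dim a b := dimAux_nonneg G _ a b

end SubharmonicAux

/-- for a nonnegative real subharmonic `ψ`, the sums
`N ↦ Σ_{|μ|=N} dim(λ,μ)ψ(μ)` are non-decreasing (for `N ≥ |λ|`), and the limit exists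
and defines a harmonic function. -/
theorem subharmonic_limit_harmonic (G : GradedGraph) (ψ : G.V → ℝ)
    (hψ0 : ∀ a, 0 ≤ ψ a)
    (hsub : ∀ a, ψ a ≤ ∑ᶠ b, G.k a b * ψ b) :
    (∀ (lam : G.V) (N M : ℕ), G.lvl lam ≤ N → N ≤ M →
        (∑ᶠ μ ∈ {μ : G.V | G.lvl μ = N}, ENNReal.ofReal (G.dim lam μ * ψ μ)) ≤
          ∑ᶠ μ ∈ {μ : G.V | G.lvl μ = M}, ENNReal.ofReal (G.dim lam μ * ψ μ)) ∧
      ∃ cbar : G.V → ℝ≥0∞, G.Harmonic cbar ∧ ∀ lam : G.V,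
        Tendsto (fun N => ∑ᶠ μ ∈ {μ : G.V | G.lvl μ = N},
          ENNReal.ofReal (G.dim lam μ * ψ μ)) atTop (𝓝 (cbar lam)) := by
  classical
  set S : G.V → ℕ → ℝ≥0∞ :=
    fun lam N => ∑ μ ∈ levelFinset G N, ENNReal.ofReal (G.dim lam μ * ψ μ) with hSdef
  set Sr : G.V → ℕ → ℝ := fun lam N => ∑ μ ∈ levelFinset G N, G.dim lam μ * ψ μ with hSrdef
  have hset : ∀ N : ℕ, {μ : G.V | G.lvl μ = N} = ↑(levelFinset G N) := by
    intro N; ext μ; simp [mem_levelFinset]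
  have hfin : ∀ (lam : G.V) (N : ℕ),
      (∑ᶠ μ ∈ {μ : G.V | G.lvl μ = N}, ENNReal.ofReal (G.dim lam μ * ψ μ)) = S lam N := by
    intro lam N
    rw [hset N, finsum_mem_coe_finset]
  have hSr_nonneg : ∀ (lam : G.V) (N : ℕ), ∀ μ ∈ levelFinset G N, 0 ≤ G.dim lam μ * ψ μ :=
    fun lam N μ _ => mul_nonneg (dim_nonneg G lam μ) (hψ0 μ)
  have hSof : ∀ (lam : G.V) (N : ℕ), S lam N = ENNReal.ofReal (Sr lam N) := by
    intro lam N
    simp only [hSdef, hSrdef]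
    exact (ENNReal.ofReal_sum_of_nonneg (hSr_nonneg lam N)).symm
  have hsub' : ∀ c : G.V, ψ c ≤ ∑ b ∈ levelFinset G (G.lvl c + 1), G.k c b * ψ b := by
    intro c
    have h := hsub c
    rwa [finsum_eq_finset_sum_of_support_subset _ (k_support_subset G c ψ)] at h
  have hdim_rec : ∀ (lam : G.V) (N : ℕ), G.lvl lam ≤ N → ∀ μ ∈ levelFinset G (N + 1),
      G.dim lam μ = ∑ c ∈ levelFinset G N, G.dim lam c * G.k c μ := by
    intro lam N hlam μ hμ
    have hμl : G.lvl μ = N + 1 := (mem_levelFinset G).mp hμ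
    have h1 : G.dim lam μ = G.dimAux (N - G.lvl lam + 1) lam μ := by
      simp only [GradedGraph.dim, hμl]
      congr 1
      omega
    have hsupp : (Function.support fun c => G.dimAux (N - G.lvl lam) lam c * G.k c μ)
        ⊆ ↑(levelFinset G N) := by
      have h3 := dimAux_support_subset G (N - G.lvl lam) lam (fun c => G.k c μ)
      rwa [show G.lvl lam + (N - G.lvl lam) = N by omega] at h3
    rw [h1, dimAux_succ, finsum_eq_finset_sum_of_support_subset _ hsupp]
    refine Finset.sum_congr rfl fun c hc => ?_
    have hcl : G.lvl c = N := (mem_levelFinset G).mp hc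
    congr 1
    simp only [GradedGraph.dim, hcl]
  have hstep : ∀ (lam : G.V) (N : ℕ), G.lvl lam ≤ N → Sr lam N ≤ Sr lam (N + 1) := by
    intro lam N hlam
    have key : Sr lam (N + 1) = ∑ c ∈ levelFinset G N,
        G.dim lam c * ∑ μ ∈ levelFinset G (N + 1), G.k c μ * ψ μ := by
      simp only [hSrdef]
      calc ∑ μ ∈ levelFinset G (N + 1), G.dim lam μ * ψ μ
          = ∑ μ ∈ levelFinset G (N + 1), ∑ c ∈ levelFinset G N,
              G.dim lam c * (G.k c μ * ψ μ) := by
            refine Finset.sum_congr rfl fun μ hμ => ?_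
            rw [hdim_rec lam N hlam μ hμ, Finset.sum_mul]
            exact Finset.sum_congr rfl fun c _ => by ring
        _ = ∑ c ∈ levelFinset G N, G.dim lam c *
              ∑ μ ∈ levelFinset G (N + 1), G.k c μ * ψ μ := by
            rw [Finset.sum_comm]
            exact Finset.sum_congr rfl fun c _ => (Finset.mul_sum _ _ _).symm
    rw [key]
    refine Finset.sum_le_sum fun c hc => ?_
    have hcl : G.lvl c = N := (mem_levelFinset G).mp hc
    have h2 : ψ c ≤ ∑ μ ∈ levelFinset G (N + 1), G.k c μ * ψ μ := by
      have h := hsub' c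
      rwa [hcl] at h
    exact mul_le_mul_of_nonneg_left h2 (dim_nonneg G lam c)
  have hmonoSr : ∀ (lam : G.V) (N M : ℕ), G.lvl lam ≤ N → N ≤ M → Sr lam N ≤ Sr lam M := by
    intro lam N M hN hNM
    induction M, hNM using Nat.le_induction with
    | base => exact le_refl _
    | succ M hM ih => exact le_trans ih (hstep lam M (le_trans hN hM))
  have hS_zero : ∀ (b : G.V) (M : ℕ), M < G.lvl b → S b M = 0 := by
    intro b M hM
    simp only [hSdef]
    refine Finset.sum_eq_zero fun μ hμ => ?_
    have hμl : G.lvl μ = M := (mem_levelFinset G).mp hμ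
    have hd : G.dim b μ = 0 := by
      simp only [GradedGraph.dim]
      rw [show G.lvl μ - G.lvl b = 0 by omega, dimAux_zero]
      have : b ≠ μ := by intro h; rw [h] at hM; omega
      simp [this]
    simp [hd]
  have hmonoS : ∀ (b : G.V), Monotone (S b) := by
    intro b N M hNM
    by_cases hN : G.lvl b ≤ N
    · rw [hSof, hSof]
      exact ENNReal.ofReal_le_ofReal (hmonoSr b N M hN hNM)
    · rw [hS_zero b N (by omega)]
      exact zero_le
  have hfsR : ∀ (a : G.V) (N : ℕ), G.lvl a + 1 ≤ N →
      Sr a N = ∑ b ∈ levelFinset G (G.lvl a + 1), G.k a b * Sr b N := by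
    intro a N hN
    have hdim1 : ∀ μ ∈ levelFinset G N,
        G.dim a μ = ∑ b ∈ levelFinset G (G.lvl a + 1), G.k a b * G.dim b μ := by
      intro μ hμ
      have hμl : G.lvl μ = N := (mem_levelFinset G).mp hμ
      have h1 : G.dim a μ = G.dimAux ((N - (G.lvl a + 1)) + 1) a μ := by
        simp only [GradedGraph.dim, hμl]
        congr 1
        omega
      rw [h1, dimAux_succ_left,
        finsum_eq_finset_sum_of_support_subset _ (k_support_subset G a _)]
      refine Finset.sum_congr rfl fun b hb => ?_
      have hbl : G.lvl b = G.lvl a + 1 := (mem_levelFinset G).mp hb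
      congr 1
      simp only [GradedGraph.dim, hμl, hbl]
    simp only [hSrdef]
    calc ∑ μ ∈ levelFinset G N, G.dim a μ * ψ μ
        = ∑ μ ∈ levelFinset G N, ∑ b ∈ levelFinset G (G.lvl a + 1),
            G.k a b * (G.dim b μ * ψ μ) := by
          refine Finset.sum_congr rfl fun μ hμ => ?_
          rw [hdim1 μ hμ, Finset.sum_mul]
          exact Finset.sum_congr rfl fun b _ => by ring
      _ = ∑ b ∈ levelFinset G (G.lvl a + 1), G.k a b *
            ∑ μ ∈ levelFinset G N, G.dim b μ * ψ μ := by
          rw [Finset.sum_comm]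
          exact Finset.sum_congr rfl fun b _ => (Finset.mul_sum _ _ _).symm
  have hfsS : ∀ (a : G.V) (N : ℕ), G.lvl a + 1 ≤ N →
      S a N = ∑ b ∈ levelFinset G (G.lvl a + 1), ENNReal.ofReal (G.k a b) * S b N := by
    intro a N hN
    have hSrb0 : ∀ b : G.V, 0 ≤ Sr b N := fun b => Finset.sum_nonneg (hSr_nonneg b N)
    rw [hSof, hfsR a N hN, ENNReal.ofReal_sum_of_nonneg
      (fun b _ => mul_nonneg (G.k_nonneg a b) (hSrb0 b))]
    refine Finset.sum_congr rfl fun b _ => ?_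
    rw [ENNReal.ofReal_mul (G.k_nonneg a b), hSof]
  set cbar : G.V → ℝ≥0∞ := fun a => ⨆ N : ℕ, S a (G.lvl a + N) with hcbar
  have htend : ∀ lam : G.V, Tendsto (fun N => S lam N) atTop (𝓝 (cbar lam)) := by
    intro lam
    rw [← tendsto_add_atTop_iff_nat (G.lvl lam)]
    have heq : (fun N => S lam (N + G.lvl lam)) = fun N => S lam (G.lvl lam + N) := by
      funext N; rw [add_comm]
    rw [heq]
    exact tendsto_atTop_iSup fun N M h => hmonoS lam (by omega)
  have hharm : G.Harmonic cbar := by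
    intro a
    have hsupp : (Function.support fun b => ENNReal.ofReal (G.k a b) * cbar b)
        ⊆ ↑(levelFinset G (G.lvl a + 1)) := by
      intro b hb
      simp only [Finset.mem_coe, mem_levelFinset]
      apply G.k_grade a b
      intro h0
      apply hb
      simp [h0]
    rw [finsum_eq_finset_sum_of_support_subset _ hsupp]
    calc cbar a = ⨆ N : ℕ, S a (G.lvl a + N) := rfl
      _ = ⨆ N : ℕ, S a (G.lvl a + 1 + N) := by
          apply le_antisymm
          · refine iSup_le fun N => ?_
            exact le_trans (hmonoS a (by omega : G.lvl a + N ≤ G.lvl a + 1 + N))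
              (le_iSup (fun N => S a (G.lvl a + 1 + N)) N)
          · refine iSup_le fun N => ?_
            refine le_iSup_of_le (N + 1) ?_
            rw [show G.lvl a + (N + 1) = G.lvl a + 1 + N by omega]
      _ = ⨆ N : ℕ, ∑ b ∈ levelFinset G (G.lvl a + 1),
            ENNReal.ofReal (G.k a b) * S b (G.lvl a + 1 + N) :=
          iSup_congr fun N => hfsS a (G.lvl a + 1 + N) (by omega)
      _ = ∑ b ∈ levelFinset G (G.lvl a + 1),
            ⨆ N : ℕ, ENNReal.ofReal (G.k a b) * S b (G.lvl a + 1 + N) := by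
          symm
          exact ENNReal.finsetSum_iSup_of_monotone fun b N M h =>
            mul_le_mul_right (hmonoS b (by omega)) _
      _ = ∑ b ∈ levelFinset G (G.lvl a + 1), ENNReal.ofReal (G.k a b) * cbar b := by
          refine Finset.sum_congr rfl fun b hb => ?_
          have hbl : G.lvl b = G.lvl a + 1 := (mem_levelFinset G).mp hb
          rw [hcbar]
          simp only []
          rw [hbl, ENNReal.mul_iSup]
  refine ⟨?_, cbar, hharm, ?_⟩
  · intro lam N M hN hNM
    rw [hfin, hfin]
    exact hmonoS lam hNM
  · intro lam
    have heq : (fun N => ∑ᶠ μ ∈ {μ : G.V | G.lvl μ = N},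
        ENNReal.ofReal (G.dim lam μ * ψ μ)) = fun N => S lam N :=
      funext fun N => hfin lam N
    rw [heq]
    exact htend lam
end

section
/- A harmonic function φ on a graded graph Γ, not everywhere finite, is semifinite if and only if for every vertex λ the equality φ(λ) = lim_{N→∞} Σ_{μ ≥ λ, |μ|=N, 0<φ(μ)<+∞} dim(λ,μ)φ(μ) holds. -/
open Filter Topology ENNReal
open scoped Classical

noncomputable section

namespace GradedGraph

variable (G : GradedGraph)

def LN (n : ℕ) : Finset G.V := (G.levelFinite n).toFinset

variable {G}


lemma mem_LN {n : ℕ} {v : G.V} : v ∈ G.LN n ↔ G.lvl v = n := Set.Finite.mem_toFinset _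

lemma dimAux_nonneg : ∀ (n : ℕ) (a b : G.V), 0 ≤ G.dimAux n a b
  | 0, a, b => by rw [GradedGraph.dimAux]; split <;> norm_num
  | n+1, a, b => by
      rw [GradedGraph.dimAux]
      exact finsum_nonneg fun c => mul_nonneg (dimAux_nonneg n a c) (G.k_nonneg c b)

lemma dimAux_lvl : ∀ (n : ℕ) (a b : G.V), G.dimAux n a b ≠ 0 → G.lvl b = G.lvl a + n
  | 0, a, b, h => by
      rw [GradedGraph.dimAux] at h
      split at h
      · subst ‹a = b›; simp
      · simp at h
  | n+1, a, b, h => by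
      rw [GradedGraph.dimAux] at h
      by_cases hall : ∀ c, G.dimAux n a c * G.k c b = 0
      · rw [finsum_congr hall, finsum_zero] at h; exact absurd rfl h
      · push_neg at hall
        obtain ⟨c, hc⟩ := hall
        have h1 : G.dimAux n a c ≠ 0 := left_ne_zero_of_mul hc
        have h2 : G.k c b ≠ 0 := right_ne_zero_of_mul hc
        rw [G.k_grade c b h2, dimAux_lvl n a c h1]; omega

lemma dimAux_succ_sum (n : ℕ) (a b : G.V) :
    G.dimAux (n+1) a b = ∑ c ∈ G.LN (G.lvl a + n), G.dimAux n a c * G.k c b := by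
  rw [GradedGraph.dimAux]
  refine finsum_eq_finset_sum_of_support_subset _ fun c hc => ?_
  have : G.dimAux n a c ≠ 0 := left_ne_zero_of_mul hc
  simp only [Finset.coe_sort_coe, Finset.mem_coe, mem_LN]
  exact dimAux_lvl n a c this

lemma dimAux_Le : ∀ (n : ℕ) (a b : G.V), G.dimAux n a b ≠ 0 → G.Le a b
  | 0, a, b, h => by
      rw [GradedGraph.dimAux] at h
      split at h
      · subst ‹a = b›; exact Relation.ReflTransGen.refl
      · simp at h
  | n+1, a, b, h => by
      rw [GradedGraph.dimAux] at h
      by_cases hall : ∀ c, G.dimAux n a c * G.k c b = 0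
      · rw [finsum_congr hall, finsum_zero] at h; exact absurd rfl h
      · push_neg at hall
        obtain ⟨c, hc⟩ := hall
        have h1 : G.dimAux n a c ≠ 0 := left_ne_zero_of_mul hc
        have h2 : G.k c b ≠ 0 := right_ne_zero_of_mul hc
        exact Relation.ReflTransGen.tail (dimAux_Le n a c h1)
          (lt_of_le_of_ne (G.k_nonneg c b) (Ne.symm h2))

lemma dimAux_first : ∀ (n : ℕ) (a b : G.V),
    G.dimAux (n+1) a b = ∑ c ∈ G.LN (G.lvl a + 1), G.k a c * G.dimAux n c b
  | 0, a, b => by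
      rw [dimAux_succ_sum]
      have hL : ∑ c ∈ G.LN (G.lvl a + 0), G.dimAux 0 a c * G.k c b = G.k a b := by
        have : ∀ c ∈ G.LN (G.lvl a + 0), G.dimAux 0 a c * G.k c b
            = if a = c then G.k c b else 0 := by
          intro c _; rw [GradedGraph.dimAux]; split <;> simp
        rw [Finset.sum_congr rfl this, Finset.sum_ite_eq]
        have ha : a ∈ G.LN (G.lvl a + 0) := mem_LN.2 (by omega)
        rw [if_pos ha]
      have hR : ∑ c ∈ G.LN (G.lvl a + 1), G.k a c * G.dimAux 0 c b = G.k a b := by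
        have : ∀ c ∈ G.LN (G.lvl a + 1), G.k a c * G.dimAux 0 c b
            = if c = b then G.k a c else 0 := by
          intro c _; rw [GradedGraph.dimAux]; split <;> simp
        rw [Finset.sum_congr rfl this, Finset.sum_ite_eq']
        by_cases hb : b ∈ G.LN (G.lvl a + 1)
        · rw [if_pos hb]
        · simp only [hb, if_false]
          by_contra hk
          exact hb (mem_LN.2 (G.k_grade a b (Ne.symm hk)))
      rw [hL, hR]
  | n+1, a, b => by
      rw [dimAux_succ_sum]
      have step : ∀ c ∈ G.LN (G.lvl a + (n+1)), G.dimAux (n+1) a c * G.k c b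
          = ∑ e ∈ G.LN (G.lvl a + 1), G.k a e * G.dimAux n e c * G.k c b := by
        intro c _
        rw [dimAux_first n a c, Finset.sum_mul]
      rw [Finset.sum_congr rfl step, Finset.sum_comm]
      refine Finset.sum_congr rfl fun e he => ?_
      have hlvl : G.lvl e = G.lvl a + 1 := mem_LN.1 he
      have : ∑ c ∈ G.LN (G.lvl a + (n+1)), G.k a e * G.dimAux n e c * G.k c b
          = G.k a e * ∑ c ∈ G.LN (G.lvl e + n), G.dimAux n e c * G.k c b := by
        rw [Finset.mul_sum]
        refine Finset.sum_congr (by rw [hlvl]; congr 1; omega) fun c _ => by ring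
      rw [this, ← dimAux_succ_sum]

lemma harmonic_sum {φ : G.V → ℝ≥0∞} (hφ : G.Harmonic φ) (a : G.V) :
    φ a = ∑ b ∈ G.LN (G.lvl a + 1), ENNReal.ofReal (G.k a b) * φ b := by
  rw [hφ a]
  refine finsum_eq_finset_sum_of_support_subset _ fun b hb => ?_
  have hb' : ENNReal.ofReal (G.k a b) * φ b ≠ 0 := hb
  have hk : G.k a b ≠ 0 := by
    intro h0; rw [h0] at hb'; simp at hb'
  simp only [Finset.coe_sort_coe, Finset.mem_coe, mem_LN]
  exact G.k_grade a b hk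

lemma harmonic_iter {φ : G.V → ℝ≥0∞} (hφ : G.Harmonic φ) :
    ∀ (n : ℕ) (a : G.V), φ a = ∑ μ ∈ G.LN (G.lvl a + n), ENNReal.ofReal (G.dimAux n a μ) * φ μ
  | 0, a => by
      have key : ∀ μ ∈ G.LN (G.lvl a + 0),
          ENNReal.ofReal (G.dimAux 0 a μ) * φ μ = if a = μ then φ μ else 0 := by
        intro μ _; rw [GradedGraph.dimAux]; split <;> simp
      rw [Finset.sum_congr rfl key, Finset.sum_ite_eq,
        if_pos (mem_LN.2 (by omega) : a ∈ G.LN (G.lvl a + 0))]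
  | n+1, a => by
      have key : ∀ μ ∈ G.LN (G.lvl a + (n+1)),
          ENNReal.ofReal (G.dimAux (n+1) a μ) * φ μ
          = ∑ b ∈ G.LN (G.lvl a + 1), ENNReal.ofReal (G.k a b) *
              (ENNReal.ofReal (G.dimAux n b μ) * φ μ) := by
        intro μ _
        rw [dimAux_first n a μ, ENNReal.ofReal_sum_of_nonneg
          (fun b _ => mul_nonneg (G.k_nonneg a b) (dimAux_nonneg n b μ)), Finset.sum_mul]
        refine Finset.sum_congr rfl fun b _ => ?_
        rw [ENNReal.ofReal_mul (G.k_nonneg a b), mul_assoc]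
      rw [Finset.sum_congr rfl key, Finset.sum_comm]
      have inner : ∀ b ∈ G.LN (G.lvl a + 1),
          ∑ μ ∈ G.LN (G.lvl a + (n+1)), ENNReal.ofReal (G.k a b) *
            (ENNReal.ofReal (G.dimAux n b μ) * φ μ)
          = ENNReal.ofReal (G.k a b) * φ b := by
        intro b hb
        rw [← Finset.mul_sum]
        congr 1
        have hEq : G.lvl a + (n+1) = G.lvl b + n := by
          have := mem_LN.1 hb; omega
        rw [hEq, ← harmonic_iter hφ n b]
      rw [Finset.sum_congr rfl inner, ← harmonic_sum hφ a]

def Tm (G : GradedGraph) (N : ℕ) (μ : G.V) : (G.V →₀ ℝ) →ₗ[ℝ] ℝ :=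
  Finsupp.linearCombination ℝ (fun a => G.dimAux (N - G.lvl a) a μ)

lemma Tm_apply (N : ℕ) (μ : G.V) (c : G.V →₀ ℝ) :
    Tm G N μ c = ∑ a ∈ c.support, c a * G.dimAux (N - G.lvl a) a μ := by
  simp [Tm, Finsupp.linearCombination_apply, Finsupp.sum, smul_eq_mul]

lemma Tm_single (N : ℕ) (μ a : G.V) :
    Tm G N μ (Finsupp.single a 1) = G.dimAux (N - G.lvl a) a μ := by
  simp [Tm]

lemma Tm_nonneg {N : ℕ} {μ : G.V} {c : G.V →₀ ℝ} (hc : ∀ a, 0 ≤ c a) :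
    0 ≤ Tm G N μ c := by
  rw [Tm_apply]
  exact Finset.sum_nonneg fun a _ => mul_nonneg (hc a) (dimAux_nonneg _ a μ)

lemma finsum_k_single (a : G.V) :
    ∑ᶠ b, G.k a b • Finsupp.single b (1:ℝ)
      = ∑ b ∈ G.LN (G.lvl a + 1), G.k a b • Finsupp.single b (1:ℝ) := by
  refine finsum_eq_finset_sum_of_support_subset _ fun b hb => ?_
  have hb' : G.k a b • Finsupp.single b (1:ℝ) ≠ 0 := hb
  have hk : G.k a b ≠ 0 := by
    intro h0; rw [h0, zero_smul] at hb'; exact hb' rfl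
  simp only [Finset.coe_sort_coe, Finset.mem_coe, mem_LN]
  exact G.k_grade a b hk

lemma Tm_gen {N : ℕ} {a : G.V} (hN : G.lvl a < N) (μ : G.V) :
    Tm G N μ (Finsupp.single a 1 - ∑ᶠ b, G.k a b • Finsupp.single b (1:ℝ)) = 0 := by
  obtain ⟨m, hm⟩ : ∃ m, N - G.lvl a = m + 1 := ⟨N - G.lvl a - 1, by omega⟩
  rw [finsum_k_single, map_sub, map_sum, Tm_single, hm]
  have key : ∀ b ∈ G.LN (G.lvl a + 1),
      Tm G N μ (G.k a b • Finsupp.single b (1:ℝ)) = G.k a b * G.dimAux m b μ := by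
    intro b hb
    rw [map_smul, Tm_single, smul_eq_mul]
    congr 2
    have := mem_LN.1 hb; omega
  rw [Finset.sum_congr rfl key, dimAux_first, sub_eq_zero]

lemma relSub_killed {r : G.V →₀ ℝ} (hr : r ∈ G.relSub) :
    ∃ M : ℕ, ∀ N, M ≤ N → ∀ μ, Tm G N μ r = 0 := by
  refine Submodule.span_induction (p := fun x _ => ∃ M : ℕ, ∀ N, M ≤ N → ∀ μ, Tm G N μ x = 0)
    ?_ ?_ ?_ ?_ hr
  · rintro x ⟨a, rfl⟩
    exact ⟨G.lvl a + 1, fun N hN μ => Tm_gen (by omega) μ⟩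
  · exact ⟨0, fun N _ μ => map_zero _⟩
  · rintro x y _ _ ⟨M1, h1⟩ ⟨M2, h2⟩
    exact ⟨max M1 M2, fun N hN μ => by
      rw [map_add, h1 N (le_trans (le_max_left _ _) hN) μ,
        h2 N (le_trans (le_max_right _ _) hN) μ, add_zero]⟩
  · rintro t x _ ⟨M, h⟩
    exact ⟨M, fun N hN μ => by rw [map_smul, h N hN μ, smul_zero]⟩

lemma single_expand (a : G.V) :
    ∀ n : ℕ, Finsupp.single a (1:ℝ)
      - ∑ μ ∈ G.LN (G.lvl a + n), G.dimAux n a μ • Finsupp.single μ (1:ℝ) ∈ G.relSub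
  | 0 => by
      have key : ∀ μ ∈ G.LN (G.lvl a + 0),
          G.dimAux 0 a μ • Finsupp.single μ (1:ℝ)
            = if a = μ then Finsupp.single μ (1:ℝ) else 0 := by
        intro μ _; rw [GradedGraph.dimAux]; split <;> simp
      rw [Finset.sum_congr rfl key, Finset.sum_ite_eq,
        if_pos (mem_LN.2 (by omega) : a ∈ G.LN (G.lvl a + 0)), sub_self]
      exact Submodule.zero_mem _
  | n+1 => by
      have key : ∑ μ ∈ G.LN (G.lvl a + n), G.dimAux n a μ •
          (Finsupp.single μ (1:ℝ) - ∑ᶠ b, G.k μ b • Finsupp.single b (1:ℝ))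
          = (∑ μ ∈ G.LN (G.lvl a + n), G.dimAux n a μ • Finsupp.single μ (1:ℝ))
            - ∑ ν ∈ G.LN (G.lvl a + (n+1)), G.dimAux (n+1) a ν • Finsupp.single ν (1:ℝ) := by
        have e1 : ∀ μ ∈ G.LN (G.lvl a + n), G.dimAux n a μ •
            (Finsupp.single μ (1:ℝ) - ∑ᶠ b, G.k μ b • Finsupp.single b (1:ℝ))
            = G.dimAux n a μ • Finsupp.single μ (1:ℝ)
              - ∑ ν ∈ G.LN (G.lvl a + (n+1)), (G.dimAux n a μ * G.k μ ν) • Finsupp.single ν (1:ℝ) := by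
          intro μ hμ
          rw [finsum_k_single, smul_sub, Finset.smul_sum]
          congr 1
          have hμl := mem_LN.1 hμ
          refine Finset.sum_congr (by rw [hμl]; congr 1) fun ν _ => ?_
          rw [smul_smul]
        rw [Finset.sum_congr rfl e1, Finset.sum_sub_distrib]
        congr 1
        rw [Finset.sum_comm]
        refine Finset.sum_congr rfl fun ν _ => ?_
        rw [← Finset.sum_smul, ← dimAux_succ_sum]
      have mem1 : ∑ μ ∈ G.LN (G.lvl a + n), G.dimAux n a μ •
          (Finsupp.single μ (1:ℝ) - ∑ᶠ b, G.k μ b • Finsupp.single b (1:ℝ)) ∈ G.relSub :=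
        Submodule.sum_mem _ fun μ _ => Submodule.smul_mem _ _
          (Submodule.subset_span ⟨μ, rfl⟩)
      have mem2 := Submodule.add_mem _ (single_expand a n) mem1
      rw [key] at mem2
      convert mem2 using 1
      abel

lemma c_expand {c : G.V →₀ ℝ} {N : ℕ} (hN : ∀ a ∈ c.support, G.lvl a ≤ N) :
    c - ∑ μ ∈ G.LN N, Tm G N μ c • Finsupp.single μ (1:ℝ) ∈ G.relSub := by
  have hdec : c = ∑ a ∈ c.support, c a • Finsupp.single a (1:ℝ) := by
    conv_lhs => rw [← Finsupp.sum_single c]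
    rw [Finsupp.sum]
    refine Finset.sum_congr rfl fun a _ => ?_
    rw [Finsupp.smul_single, smul_eq_mul, mul_one]
  have key : c - ∑ μ ∈ G.LN N, Tm G N μ c • Finsupp.single μ (1:ℝ)
      = ∑ a ∈ c.support, c a • (Finsupp.single a (1:ℝ)
          - ∑ μ ∈ G.LN N, G.dimAux (N - G.lvl a) a μ • Finsupp.single μ (1:ℝ)) := by
    have e1 : ∀ a ∈ c.support, c a • (Finsupp.single a (1:ℝ)
        - ∑ μ ∈ G.LN N, G.dimAux (N - G.lvl a) a μ • Finsupp.single μ (1:ℝ))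
        = c a • Finsupp.single a (1:ℝ)
          - ∑ μ ∈ G.LN N, (c a * G.dimAux (N - G.lvl a) a μ) • Finsupp.single μ (1:ℝ) := by
      intro a _
      rw [smul_sub, Finset.smul_sum]
      congr 1
      exact Finset.sum_congr rfl fun ν _ => by rw [smul_smul]
    rw [Finset.sum_congr rfl e1, Finset.sum_sub_distrib, ← hdec]
    congr 1
    rw [Finset.sum_comm]
    refine Finset.sum_congr rfl fun μ _ => ?_
    rw [← Finset.sum_smul, ← Tm_apply]
  rw [key]
  refine Submodule.sum_mem _ fun a ha => Submodule.smul_mem _ _ ?_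
  have : G.lvl a + (N - G.lvl a) = N := by have := hN a ha; omega
  have h2 := single_expand a (N - G.lvl a)
  rwa [this] at h2

def Sfin (G : GradedGraph) (φ : G.V → ℝ≥0∞) (N : ℕ) (c : G.V →₀ ℝ) : ℝ≥0∞ :=
  ∑ μ ∈ (G.LN N).filter (fun μ => φ μ ≠ ⊤), ENNReal.ofReal (Tm G N μ c) * φ μ

lemma evalC_level {φ : G.V → ℝ≥0∞} (hφ : G.Harmonic φ) {c : G.V →₀ ℝ} {N : ℕ}
    (hc : ∀ a, 0 ≤ c a) (hN : ∀ a ∈ c.support, G.lvl a ≤ N) :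
    G.evalC φ c = ∑ μ ∈ G.LN N, ENNReal.ofReal (Tm G N μ c) * φ μ := by
  rw [GradedGraph.evalC]
  have e1 : ∀ a ∈ c.support, ENNReal.ofReal (c a) * φ a
      = ∑ μ ∈ G.LN N, ENNReal.ofReal (c a * G.dimAux (N - G.lvl a) a μ) * φ μ := by
    intro a ha
    have hl : G.lvl a + (N - G.lvl a) = N := by have := hN a ha; omega
    conv_lhs => rw [harmonic_iter hφ (N - G.lvl a) a]
    rw [hl, Finset.mul_sum]
    refine Finset.sum_congr rfl fun μ _ => ?_
    rw [ENNReal.ofReal_mul (hc a), mul_assoc]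
  rw [Finset.sum_congr rfl e1, Finset.sum_comm]
  refine Finset.sum_congr rfl fun μ _ => ?_
  rw [Tm_apply, ENNReal.ofReal_sum_of_nonneg
    (fun a _ => mul_nonneg (hc a) (dimAux_nonneg _ _ _)), Finset.sum_mul]

lemma Sfin_le_evalC {φ : G.V → ℝ≥0∞} (hφ : G.Harmonic φ) {c : G.V →₀ ℝ} {N : ℕ}
    (hc : ∀ a, 0 ≤ c a) (hN : ∀ a ∈ c.support, G.lvl a ≤ N) :
    Sfin G φ N c ≤ G.evalC φ c := by
  rw [evalC_level hφ hc hN, Sfin]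
  exact Finset.sum_le_sum_of_subset (Finset.filter_subset _ _)

lemma evalC_eq_Sfin {φ : G.V → ℝ≥0∞} (hφ : G.Harmonic φ) {c : G.V →₀ ℝ} {N : ℕ}
    (hc : ∀ a, 0 ≤ c a) (hN : ∀ a ∈ c.support, G.lvl a ≤ N) (hfin : G.evalC φ c ≠ ⊤) :
    G.evalC φ c = Sfin G φ N c := by
  rw [evalC_level hφ hc hN] at hfin ⊢
  rw [Sfin, ← Finset.sum_filter_add_sum_filter_not (G.LN N) (fun μ => φ μ ≠ ⊤)]
  have h0 : ∑ μ ∈ (G.LN N).filter (fun μ => ¬ φ μ ≠ ⊤),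
      ENNReal.ofReal (Tm G N μ c) * φ μ = 0 := by
    refine Finset.sum_eq_zero fun μ hμ => ?_
    rw [Finset.mem_filter] at hμ
    have htop : φ μ = ⊤ := not_not.1 hμ.2
    have hne : ENNReal.ofReal (Tm G N μ c) * φ μ ≠ ⊤ := by
      intro heq
      exact hfin (ENNReal.sum_eq_top.2 ⟨μ, hμ.1, heq⟩)
    rw [htop] at hne ⊢
    rcases eq_or_ne (ENNReal.ofReal (Tm G N μ c)) 0 with h|h
    · rw [h, zero_mul]
    · exact absurd (ENNReal.mul_top h) hne
  rw [h0, add_zero]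

lemma evalC_single (φ : G.V → ℝ≥0∞) (a : G.V) :
    G.evalC φ (Finsupp.single a 1) = φ a := by
  rw [GradedGraph.evalC, Finsupp.support_single_ne_zero a one_ne_zero]
  simp

lemma Sfin_mono {φ : G.V → ℝ≥0∞} (hφ : G.Harmonic φ) {c : G.V →₀ ℝ} {N : ℕ}
    (hc : ∀ a, 0 ≤ c a) (hN : ∀ a ∈ c.support, G.lvl a ≤ N) :
    Sfin G φ N c ≤ Sfin G φ (N+1) c := by
  have Trec : ∀ ν, Tm G (N+1) ν c = ∑ μ ∈ G.LN N, Tm G N μ c * G.k μ ν := by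
    intro ν
    rw [Tm_apply]
    have e1 : ∀ a ∈ c.support, c a * G.dimAux (N + 1 - G.lvl a) a ν
        = ∑ μ ∈ G.LN N, c a * G.dimAux (N - G.lvl a) a μ * G.k μ ν := by
      intro a ha
      have h1 : N + 1 - G.lvl a = (N - G.lvl a) + 1 := by have := hN a ha; omega
      have h2 : G.lvl a + (N - G.lvl a) = N := by have := hN a ha; omega
      rw [h1, dimAux_succ_sum, h2, Finset.mul_sum]
      exact Finset.sum_congr rfl fun μ _ => by ring
    rw [Finset.sum_congr rfl e1, Finset.sum_comm]
    exact Finset.sum_congr rfl fun μ _ => by rw [Tm_apply, Finset.sum_mul]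
  rw [Sfin]
  have expand : ∀ μ ∈ (G.LN N).filter (fun μ => φ μ ≠ ⊤),
      ENNReal.ofReal (Tm G N μ c) * φ μ
      = ∑ ν ∈ G.LN (N+1), ENNReal.ofReal (Tm G N μ c * G.k μ ν) * φ ν := by
    intro μ hμ
    rw [Finset.mem_filter] at hμ
    have hl : G.lvl μ + 1 = N + 1 := by rw [mem_LN.1 hμ.1]
    conv_lhs => rw [harmonic_sum hφ μ]
    rw [hl, Finset.mul_sum]
    refine Finset.sum_congr rfl fun ν _ => ?_
    rw [ENNReal.ofReal_mul (Tm_nonneg hc), mul_assoc]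
  rw [Finset.sum_congr rfl expand, Finset.sum_comm]
  set F : G.V → ℝ≥0∞ := fun ν => ∑ μ ∈ (G.LN N).filter (fun μ => φ μ ≠ ⊤),
    ENNReal.ofReal (Tm G N μ c * G.k μ ν) * φ ν with hF
  have hzero : ∀ ν ∈ (G.LN (N+1)).filter (fun ν => ¬ φ ν ≠ ⊤), F ν = 0 := by
    intro ν hν
    rw [Finset.mem_filter] at hν
    have hνtop : φ ν = ⊤ := not_not.1 hν.2
    refine Finset.sum_eq_zero fun μ hμ => ?_
    rw [Finset.mem_filter] at hμ
    have hk : G.k μ ν = 0 := by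
      by_contra hk
      have hlt : 0 < G.k μ ν := lt_of_le_of_ne (G.k_nonneg μ ν) (Ne.symm hk)
      have hmem : ν ∈ G.LN (G.lvl μ + 1) := mem_LN.2 (G.k_grade μ ν hk)
      refine hμ.2 ?_
      rw [harmonic_sum hφ μ, ENNReal.sum_eq_top]
      refine ⟨ν, hmem, ?_⟩
      rw [hνtop, ENNReal.mul_top ?_]
      rw [Ne, ENNReal.ofReal_eq_zero]
      exact not_le.2 hlt
    rw [hk, mul_zero, ENNReal.ofReal_zero, zero_mul]
  have hbound : ∀ ν ∈ (G.LN (N+1)).filter (fun ν => φ ν ≠ ⊤),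
      F ν ≤ ENNReal.ofReal (Tm G (N+1) ν c) * φ ν := by
    intro ν hν
    rw [hF]; dsimp only
    have : ∑ μ ∈ (G.LN N).filter (fun μ => φ μ ≠ ⊤),
        ENNReal.ofReal (Tm G N μ c * G.k μ ν) * φ ν
        = (∑ μ ∈ (G.LN N).filter (fun μ => φ μ ≠ ⊤),
            ENNReal.ofReal (Tm G N μ c * G.k μ ν)) * φ ν := by
      rw [Finset.sum_mul]
    rw [this]
    refine mul_le_mul_left ?_ _
    rw [← ENNReal.ofReal_sum_of_nonneg
      (fun μ _ => mul_nonneg (Tm_nonneg hc) (G.k_nonneg μ ν))]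
    refine ENNReal.ofReal_le_ofReal ?_
    rw [Trec ν]
    exact Finset.sum_le_sum_of_subset_of_nonneg (Finset.filter_subset _ _)
      (fun μ _ _ => mul_nonneg (Tm_nonneg hc) (G.k_nonneg μ ν))
  calc ∑ ν ∈ G.LN (N+1), F ν
      = ∑ ν ∈ (G.LN (N+1)).filter (fun ν => φ ν ≠ ⊤), F ν
        + ∑ ν ∈ (G.LN (N+1)).filter (fun ν => ¬ φ ν ≠ ⊤), F ν := by
        rw [Finset.sum_filter_add_sum_filter_not]
    _ = ∑ ν ∈ (G.LN (N+1)).filter (fun ν => φ ν ≠ ⊤), F ν := by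
        rw [Finset.sum_eq_zero hzero, add_zero]
    _ ≤ Sfin G φ (N+1) c := Finset.sum_le_sum hbound

lemma Sfin_mono' {φ : G.V → ℝ≥0∞} (hφ : G.Harmonic φ) {c : G.V →₀ ℝ} {N N' : ℕ}
    (hc : ∀ a, 0 ≤ c a) (hN : ∀ a ∈ c.support, G.lvl a ≤ N) (h : N ≤ N') :
    Sfin G φ N c ≤ Sfin G φ N' c := by
  induction N', h using Nat.le_induction with
  | base => exact le_refl _
  | succ n hn ih =>
      exact le_trans ih (Sfin_mono hφ hc (fun a ha => le_trans (le_trans (hN a ha) hn) (le_refl n)))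

lemma evalC_le_Sfin {φ : G.V → ℝ≥0∞} (hφ : G.Harmonic φ) {c d : G.V →₀ ℝ}
    (hc : ∀ a, 0 ≤ c a) (hd : ∀ a, 0 ≤ d a)
    (hle : G.leK (G.toK0 d) (G.toK0 c)) (hdfin : G.evalC φ d ≠ ⊤) :
    ∃ M : ℕ, ∀ N, M ≤ N → G.evalC φ d ≤ Sfin G φ N c := by
  obtain ⟨e, he, heq⟩ := hle
  have hr : c - d - e ∈ G.relSub := by
    have h0 : G.toK0 (c - d - e) = 0 := by
      rw [map_sub, map_sub, heq, sub_self]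
    rwa [GradedGraph.toK0, Submodule.mkQ_apply, Submodule.Quotient.mk_eq_zero] at h0
  obtain ⟨M0, hM0⟩ := relSub_killed hr
  refine ⟨max M0 (max (c.support.sup G.lvl) (d.support.sup G.lvl)), fun N hN => ?_⟩
  have hNc : ∀ a ∈ c.support, G.lvl a ≤ N := fun a ha =>
    le_trans (Finset.le_sup ha)
      (le_trans (le_max_left _ _) (le_trans (le_max_right _ _) hN))
  have hNd : ∀ a ∈ d.support, G.lvl a ≤ N := fun a ha =>
    le_trans (Finset.le_sup ha)
      (le_trans (le_max_right _ _) (le_trans (le_max_right _ _) hN))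
  have hTle : ∀ μ, Tm G N μ d ≤ Tm G N μ c := by
    intro μ
    have hsplit : Tm G N μ c = Tm G N μ d + Tm G N μ e + Tm G N μ (c - d - e) := by
      rw [← map_add, ← map_add]; congr 1; abel
    rw [hsplit, hM0 N (le_trans (le_max_left _ _) hN) μ, add_zero]
    exact le_add_of_nonneg_right (Tm_nonneg he)
  rw [evalC_eq_Sfin hφ hd hNd hdfin, Sfin, Sfin]
  exact Finset.sum_le_sum fun μ _ =>
    mul_le_mul_left (ENNReal.ofReal_le_ofReal (hTle μ)) _

lemma Sfin_decomp {φ : G.V → ℝ≥0∞} {N : ℕ} {c : G.V →₀ ℝ} (hc : ∀ a, 0 ≤ c a) :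
    Sfin G φ N c = ∑ a ∈ c.support, ENNReal.ofReal (c a) * Sfin G φ N (Finsupp.single a 1) := by
  rw [Sfin]
  have e1 : ∀ μ ∈ (G.LN N).filter (fun μ => φ μ ≠ ⊤),
      ENNReal.ofReal (Tm G N μ c) * φ μ
      = ∑ a ∈ c.support, ENNReal.ofReal (c a)
          * (ENNReal.ofReal (G.dimAux (N - G.lvl a) a μ) * φ μ) := by
    intro μ _
    rw [Tm_apply, ENNReal.ofReal_sum_of_nonneg
      (fun a _ => mul_nonneg (hc a) (dimAux_nonneg _ _ _)), Finset.sum_mul]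
    refine Finset.sum_congr rfl fun a _ => by rw [ENNReal.ofReal_mul (hc a), mul_assoc]
  rw [Finset.sum_congr rfl e1, Finset.sum_comm]
  refine Finset.sum_congr rfl fun a _ => ?_
  rw [← Finset.mul_sum, Sfin]
  congr 1
  exact Finset.sum_congr rfl fun μ _ => by rw [Tm_single]

def dfin (G : GradedGraph) (φ : G.V → ℝ≥0∞) (N : ℕ) (c : G.V →₀ ℝ) : G.V →₀ ℝ :=
  ∑ μ ∈ (G.LN N).filter (fun μ => φ μ ≠ ⊤), Finsupp.single μ (Tm G N μ c)

lemma dfin_apply {φ : G.V → ℝ≥0∞} {N : ℕ} {c : G.V →₀ ℝ} (x : G.V) :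
    dfin G φ N c x
      = if x ∈ (G.LN N).filter (fun μ => φ μ ≠ ⊤) then Tm G N x c else 0 := by
  rw [dfin, Finset.sum_apply']
  rw [Finset.sum_congr rfl (fun μ _ => Finsupp.single_apply)]
  exact Finset.sum_ite_eq' _ _ _

lemma dfin_nonneg {φ : G.V → ℝ≥0∞} {N : ℕ} {c : G.V →₀ ℝ} (hc : ∀ a, 0 ≤ c a) (x : G.V) :
    0 ≤ dfin G φ N c x := by
  rw [dfin_apply]
  split
  · exact Tm_nonneg hc
  · exact le_refl 0

lemma dfin_support {φ : G.V → ℝ≥0∞} {N : ℕ} {c : G.V →₀ ℝ} :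
    (dfin G φ N c).support ⊆ (G.LN N).filter (fun μ => φ μ ≠ ⊤) := by
  intro x hx
  rw [Finsupp.mem_support_iff, dfin_apply] at hx
  by_contra h
  rw [if_neg h] at hx
  exact hx rfl

lemma evalC_dfin {φ : G.V → ℝ≥0∞} {N : ℕ} {c : G.V →₀ ℝ} (hc : ∀ a, 0 ≤ c a) :
    G.evalC φ (dfin G φ N c) = Sfin G φ N c := by
  rw [GradedGraph.evalC, Sfin]
  rw [Finset.sum_subset dfin_support ?_]
  · refine Finset.sum_congr rfl fun μ hμ => ?_
    rw [dfin_apply, if_pos hμ]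
  · intro x _ hx
    rw [Finsupp.notMem_support_iff] at hx
    rw [hx, ENNReal.ofReal_zero, zero_mul]

lemma Sfin_ne_top {φ : G.V → ℝ≥0∞} {N : ℕ} {c : G.V →₀ ℝ} : Sfin G φ N c ≠ ⊤ := by
  rw [Sfin, ← lt_top_iff_ne_top, ENNReal.sum_lt_top]
  intro μ hμ
  rw [Finset.mem_filter] at hμ
  exact ENNReal.mul_lt_top ENNReal.ofReal_lt_top (lt_top_iff_ne_top.2 hμ.2)

lemma sum_single_apply {s : Finset G.V} {f : G.V → ℝ} (x : G.V) :
    (∑ μ ∈ s, Finsupp.single μ (f μ)) x = if x ∈ s then f x else 0 := by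
  rw [Finset.sum_apply']
  rw [Finset.sum_congr rfl (fun μ _ => Finsupp.single_apply)]
  exact Finset.sum_ite_eq' _ _ _

lemma dfin_leK {φ : G.V → ℝ≥0∞} {N : ℕ} {c : G.V →₀ ℝ} (hc : ∀ a, 0 ≤ c a)
    (hN : ∀ a ∈ c.support, G.lvl a ≤ N) :
    G.leK (G.toK0 (dfin G φ N c)) (G.toK0 c) := by
  set e : G.V →₀ ℝ :=
    ∑ μ ∈ (G.LN N).filter (fun μ => ¬ φ μ ≠ ⊤), Finsupp.single μ (Tm G N μ c) with hedef
  have hsum : dfin G φ N c + e = ∑ μ ∈ G.LN N, Tm G N μ c • Finsupp.single μ (1:ℝ) := by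
    rw [dfin, hedef, Finset.sum_filter_add_sum_filter_not]
    refine Finset.sum_congr rfl fun μ _ => ?_
    rw [Finsupp.smul_single, smul_eq_mul, mul_one]
  have hrel : c - (dfin G φ N c + e) ∈ G.relSub := by
    rw [hsum]; exact c_expand hN
  refine ⟨e, ?_, ?_⟩
  · intro a
    rw [hedef, sum_single_apply]
    split
    · exact Tm_nonneg hc
    · exact le_refl 0
  · have h0 : G.toK0 (c - (dfin G φ N c + e)) = 0 := by
      rw [GradedGraph.toK0, Submodule.mkQ_apply, Submodule.Quotient.mk_eq_zero]
      exact hrel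
    have : G.toK0 c - G.toK0 (dfin G φ N c) - G.toK0 e = 0 := by
      rw [← h0, map_sub, map_add]; abel
    exact sub_eq_zero.1 this

lemma statement_sum_eq {φ : G.V → ℝ≥0∞} (lam : G.V) {N : ℕ} (hN : G.lvl lam ≤ N) :
    ∑ᶠ μ ∈ {μ : G.V | G.Le lam μ ∧ G.lvl μ = N ∧ φ μ ≠ 0 ∧ φ μ ≠ ⊤},
        ENNReal.ofReal (G.dim lam μ) * φ μ
      = Sfin G φ N (Finsupp.single lam 1) := by
  have hfin : {μ : G.V | G.Le lam μ ∧ G.lvl μ = N ∧ φ μ ≠ 0 ∧ φ μ ≠ ⊤}.Finite :=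
    (G.levelFinite N).subset fun μ hμ => hμ.2.1
  rw [finsum_mem_eq_finite_toFinset_sum _ hfin, Sfin]
  have e1 : ∀ μ ∈ (G.LN N).filter (fun μ => φ μ ≠ ⊤),
      ENNReal.ofReal (Tm G N μ (Finsupp.single lam 1)) * φ μ
      = ENNReal.ofReal (G.dim lam μ) * φ μ := by
    intro μ hμ
    rw [Finset.mem_filter] at hμ
    rw [Tm_single, GradedGraph.dim, mem_LN.1 hμ.1]
  rw [Finset.sum_congr rfl e1]
  refine Finset.sum_subset ?_ ?_
  · intro μ hμ
    rw [Set.Finite.mem_toFinset] at hμ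
    rw [Finset.mem_filter]
    exact ⟨mem_LN.2 hμ.2.1, hμ.2.2.2⟩
  · intro μ hμ1 hμ2
    rw [Finset.mem_filter] at hμ1
    rw [Set.Finite.mem_toFinset] at hμ2
    simp only [Set.mem_setOf_eq, not_and] at hμ2
    by_cases hle : G.Le lam μ
    · rcases eq_or_ne (φ μ) 0 with h0 | h0
      · rw [h0, mul_zero]
      · exact absurd hμ1.2 (by simpa [hle, mem_LN.1 hμ1.1, h0] using hμ2)
    · have hd : G.dim lam μ = 0 := by
        by_contra hd
        exact hle (dimAux_Le _ _ _ hd)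
      rw [hd, ENNReal.ofReal_zero, zero_mul]

lemma single_nonneg (a : G.V) : ∀ x, 0 ≤ (Finsupp.single a (1:ℝ)) x := by
  intro x
  rw [Finsupp.single_apply]
  split <;> norm_num

lemma single_support_lvl {a : G.V} {N : ℕ} (h : G.lvl a ≤ N) :
    ∀ x ∈ (Finsupp.single a (1:ℝ)).support, G.lvl x ≤ N := by
  intro x hx
  rw [Finsupp.support_single_ne_zero a one_ne_zero, Finset.mem_singleton] at hx
  subst hx; exact h

lemma u_mono {φ : G.V → ℝ≥0∞} (hφ : G.Harmonic φ) (a : G.V) :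
    Monotone (fun n => Sfin G φ (G.lvl a + n) (Finsupp.single a 1)) := by
  refine monotone_nat_of_le_succ fun n => ?_
  exact Sfin_mono hφ (single_nonneg a) (single_support_lvl (by omega))

lemma u_le {φ : G.V → ℝ≥0∞} (hφ : G.Harmonic φ) (a : G.V) (n : ℕ) :
    Sfin G φ (G.lvl a + n) (Finsupp.single a 1) ≤ φ a := by
  have h := Sfin_le_evalC hφ (single_nonneg a) (single_support_lvl (by omega : G.lvl a ≤ G.lvl a + n))
  rwa [evalC_single] at h

end GradedGraph

end

/-- a not-everywhere-finite harmonic function is semifinite iff for every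
vertex `λ`, `φ(λ) = lim_N Σ_{μ ≥ λ, |μ|=N, 0<φ(μ)<∞} dim(λ,μ)φ(μ)`. -/
theorem semifinite_iff_limit (G : GradedGraph) (φ : G.V → ℝ≥0∞)
    (hφ : G.Harmonic φ) (hinf : ∃ a, φ a = ⊤) :
    G.Semifinite φ ↔ ∀ lam : G.V,
      Tendsto (fun N =>
          ∑ᶠ μ ∈ {μ : G.V | G.Le lam μ ∧ G.lvl μ = N ∧ φ μ ≠ 0 ∧ φ μ ≠ ⊤},
            ENNReal.ofReal (G.dim lam μ) * φ μ)
        atTop (𝓝 (φ lam)) := by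
  classical
  open GradedGraph in
  constructor
  · -- semifinite → limit
    intro hsemi lam
    have hsup : ⨆ n, Sfin G φ (G.lvl lam + n) (Finsupp.single lam 1) = φ lam := by
      refine le_antisymm (iSup_le (u_le hφ lam)) ?_
      have hval : φ lam = ⨆ d : {d : G.V →₀ ℝ //
          (∀ a, 0 ≤ d a) ∧ G.leK (G.toK0 d) (G.toK0 (Finsupp.single lam 1))
            ∧ G.evalC φ d ≠ ⊤}, G.evalC φ d.1 := by
        rw [← evalC_single φ lam]
        exact hsemi.2.2 (Finsupp.single lam 1) (single_nonneg lam)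
      rw [hval]
      refine iSup_le fun d => ?_
      obtain ⟨M, hM⟩ := evalC_le_Sfin hφ (single_nonneg lam) d.2.1 d.2.2.1 d.2.2.2
      have h1 : G.evalC φ d.1 ≤ Sfin G φ (max M (G.lvl lam)) (Finsupp.single lam 1) :=
        hM _ (le_max_left _ _)
      have h2 : G.lvl lam + (max M (G.lvl lam) - G.lvl lam) = max M (G.lvl lam) := by omega
      refine le_trans h1 (le_trans (le_of_eq ?_)
        (le_iSup (fun n => Sfin G φ (G.lvl lam + n) (Finsupp.single lam 1))
          (max M (G.lvl lam) - G.lvl lam)))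
      rw [h2]
    rw [← Filter.tendsto_add_atTop_iff_nat (G.lvl lam)]
    have t1 : Filter.Tendsto (fun n => Sfin G φ (G.lvl lam + n) (Finsupp.single lam 1))
        Filter.atTop (𝓝 (φ lam)) := by
      rw [← hsup]
      exact tendsto_atTop_iSup (u_mono hφ lam)
    refine t1.congr fun n => ?_
    rw [statement_sum_eq lam (by omega : G.lvl lam ≤ n + G.lvl lam), Nat.add_comm]
  · -- limit → semifinite
    intro hlim
    have hval : ∀ a : G.V, φ a = ⨆ n, Sfin G φ (G.lvl a + n) (Finsupp.single a 1) := by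
      intro a
      have t1 : Filter.Tendsto (fun n => Sfin G φ (G.lvl a + n) (Finsupp.single a 1))
          Filter.atTop (𝓝 (φ a)) := by
        have t2 := (Filter.tendsto_add_atTop_iff_nat (G.lvl a)).2 (hlim a)
        refine t2.congr fun n => ?_
        rw [statement_sum_eq a (by omega : G.lvl a ≤ n + G.lvl a), Nat.add_comm]
      exact tendsto_nhds_unique t1 (tendsto_atTop_iSup (u_mono hφ a))
    refine ⟨hφ, hinf, fun c hc => ?_⟩
    refine le_antisymm ?_ ?_
    · -- evalC ≤ sup
      set B := c.support.sup G.lvl with hB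
      have hlev : ∀ n : ℕ, ∀ a ∈ c.support, G.lvl a ≤ B + n :=
        fun n a ha => le_trans (Finset.le_sup ha) (by omega)
      have hphia : ∀ a ∈ c.support, φ a = ⨆ n, Sfin G φ (B + n) (Finsupp.single a 1) := by
        intro a ha
        have hab : G.lvl a ≤ B := Finset.le_sup ha
        refine le_antisymm ?_ ?_
        · rw [hval a]
          refine iSup_le fun n => ?_
          have h1 : Sfin G φ (G.lvl a + n) (Finsupp.single a 1)
              ≤ Sfin G φ (B + n) (Finsupp.single a 1) :=
            Sfin_mono' hφ (single_nonneg a)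
              (single_support_lvl (by omega : G.lvl a ≤ G.lvl a + n))
              (by omega : G.lvl a + n ≤ B + n)
          exact le_trans h1 (le_iSup (fun m => Sfin G φ (B + m) (Finsupp.single a 1)) n)
        · refine iSup_le fun n => ?_
          have h := Sfin_le_evalC hφ (single_nonneg a)
            (single_support_lvl (by omega : G.lvl a ≤ B + n))
          rwa [evalC_single] at h
      have key : G.evalC φ c = ⨆ n, Sfin G φ (B + n) c := by
        rw [GradedGraph.evalC]
        have e1 : ∀ a ∈ c.support, ENNReal.ofReal (c a) * φ a
            = ⨆ n, ENNReal.ofReal (c a) * Sfin G φ (B + n) (Finsupp.single a 1) := by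
          intro a ha
          rw [hphia a ha, ENNReal.mul_iSup]
        rw [Finset.sum_congr rfl e1, ← Finset.sum_attach c.support
          (fun a => ⨆ n, ENNReal.ofReal (c a) * Sfin G φ (B + n) (Finsupp.single a 1))]
        have hmono : ∀ a : {x // x ∈ c.support}, Monotone (fun n =>
            ENNReal.ofReal (c a.1) * Sfin G φ (B + n) (Finsupp.single a.1 1)) := by
          intro a m n hmn
          dsimp only
          refine mul_le_mul_right ?_ _
          exact Sfin_mono' hφ (single_nonneg a.1)
            (single_support_lvl (le_trans (Finset.le_sup a.2) (by omega : B ≤ B + m)))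
            (by omega)
        rw [ENNReal.finsetSum_iSup_of_monotone hmono]
        refine iSup_congr fun n => ?_
        rw [Finset.sum_attach c.support
          (fun a => ENNReal.ofReal (c a) * Sfin G φ (B + n) (Finsupp.single a 1))]
        exact (Sfin_decomp hc).symm
      rw [key]
      refine iSup_le fun n => ?_
      have hd := evalC_dfin (φ := φ) (N := B + n) hc
      refine le_trans (le_of_eq hd.symm) ?_
      exact le_iSup_of_le ⟨dfin G φ (B + n) c,
        dfin_nonneg hc, dfin_leK hc (hlev n), by rw [hd]; exact Sfin_ne_top⟩ (le_refl _)
    · -- sup ≤ evalC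
      refine iSup_le fun d => ?_
      obtain ⟨M, hM⟩ := evalC_le_Sfin hφ hc d.2.1 d.2.2.1 d.2.2.2
      set N := max M (c.support.sup G.lvl) with hN
      refine le_trans (hM N (le_max_left _ _)) ?_
      exact Sfin_le_evalC hφ hc fun a ha =>
        le_trans (Finset.le_sup ha) (le_max_right _ _)
end
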